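/- Let V = {v^{(1)},…,v^{(ℓ)}} be a multiset of ℓ vectors in ℝⁿ and σ ≥ 0. Let (x,y) be drawn from the MLR model: x₁,…,xₙ i.i.d. standard Gaussian N(0,1), v uniform from V, ζ ∼ N(0,σ²) independent, y = ⟨v,x⟩ + ζ. Then for every coordinate i ∈ [n], E[y² x_i²] = (1/ℓ) Σ_{v∈V} ( ‖v‖₂² + 2 v_i² ) + σ². In particular, if no vector in V has a non-zero i-th entry then E[y² x_i²] = (1/ℓ) Σ_{v∈V} ‖v‖₂² + σ², while if the magnitude of every non-zero entry of every vector in V is at least δ > 0 and some vector has a non-zero i-th entry, then E[y² x_i²] ≥ (1/ℓ) Σ_{v∈V} ‖v‖₂² + σ² + 2δ²/ℓ. -/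

import Mathlib

open MeasureTheory ProbabilityTheory Real Filter

noncomputable def gmraw (k : ℕ) : ℝ := ∫ x : ℝ, x ^ k * rexp (-x ^ 2 / 2)

lemma integrable_gmraw (k : ℕ) : Integrable (fun x : ℝ => x ^ k * rexp (-x ^ 2 / 2)) := by
  have h := integrable_rpow_mul_exp_neg_mul_sq (b := (2 : ℝ)⁻¹) (by norm_num)
    (s := (k : ℝ)) (lt_of_lt_of_le (by norm_num) (Nat.cast_nonneg k))
  have : (fun x : ℝ => x ^ (k : ℝ) * rexp (-(2 : ℝ)⁻¹ * x ^ 2))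
      = fun x : ℝ => x ^ k * rexp (-x ^ 2 / 2) := by
    funext x
    rw [Real.rpow_natCast]
    ring_nf
  rwa [this] at h

lemma tendsto_gexp_atTop : Tendsto (fun x : ℝ => rexp (-x ^ 2 / 2)) atTop (nhds 0) := by
  have h1 : Tendsto (fun x : ℝ => x ^ 2 / 2) atTop atTop :=
    (tendsto_pow_atTop (two_ne_zero)).atTop_div_const (by norm_num)
  have h2 : Tendsto (fun x : ℝ => -x ^ 2 / 2) atTop atBot := by
    simpa [Function.comp_def, neg_div] using (tendsto_neg_atTop_atBot).comp h1
  simpa [Function.comp_def] using Real.tendsto_exp_atBot.comp h2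

lemma tendsto_gexp_atBot : Tendsto (fun x : ℝ => rexp (-x ^ 2 / 2)) atBot (nhds 0) := by
  have := tendsto_gexp_atTop.comp tendsto_neg_atBot_atTop
  simpa [Function.comp_def, neg_pow] using this

lemma hasDerivAt_gexp (x : ℝ) :
    HasDerivAt (fun x : ℝ => -rexp (-x ^ 2 / 2)) (x * rexp (-x ^ 2 / 2)) x := by
  have h1 : HasDerivAt (fun x : ℝ => -x ^ 2 / 2) (-x) x := by
    have h := ((hasDerivAt_pow 2 x).neg).div_const 2
    refine h.congr_deriv ?_
    push_cast; ring
  have h2 := (h1.exp).neg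
  refine h2.congr_deriv ?_
  ring

lemma gmraw_rec (k : ℕ) : gmraw (k + 2) = (k + 1) * gmraw k := by
  unfold gmraw
  have hu : ∀ x : ℝ, HasDerivAt (fun x : ℝ => x ^ (k + 1)) (((k : ℝ) + 1) * x ^ k) x := by
    intro x
    have := hasDerivAt_pow (k + 1) x
    refine this.congr_deriv ?_
    push_cast; ring_nf
  have huv' : Integrable ((fun x : ℝ => x ^ (k + 1)) * fun x : ℝ => x * rexp (-x ^ 2 / 2)) := by
    apply (integrable_gmraw (k + 2)).congr
    filter_upwards with x
    simp only [Pi.mul_apply]; ring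
  have hu'v : Integrable ((fun x : ℝ => ((k : ℝ) + 1) * x ^ k) * fun x : ℝ => -rexp (-x ^ 2 / 2)) := by
    apply (((integrable_gmraw k).const_mul (-((k : ℝ) + 1))).congr)
    filter_upwards with x
    simp only [Pi.mul_apply]; ring
  have huv : Integrable ((fun x : ℝ => x ^ (k + 1)) * fun x : ℝ => -rexp (-x ^ 2 / 2)) := by
    apply ((integrable_gmraw (k + 1)).neg).congr
    filter_upwards with x
    simp only [Pi.mul_apply, Pi.neg_apply]; ring
  have key := integral_mul_deriv_eq_deriv_mul_of_integrable (fun x _ => hu x) (fun x _ => hasDerivAt_gexp x)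
    huv' hu'v huv
  have lhs : (∫ x : ℝ, x ^ (k + 1) * (x * rexp (-x ^ 2 / 2)))
      = ∫ x : ℝ, x ^ (k + 2) * rexp (-x ^ 2 / 2) := by
    congr 1; funext x; ring
  have rhs : (∫ x : ℝ, ((k : ℝ) + 1) * x ^ k * -rexp (-x ^ 2 / 2))
      = -(((k : ℝ) + 1) * ∫ x : ℝ, x ^ k * rexp (-x ^ 2 / 2)) := by
    rw [← integral_const_mul, ← integral_neg]
    congr 1; funext x; ring
  rw [lhs] at key
  rw [key, rhs, neg_neg]

lemma gmraw_zero : gmraw 0 = Real.sqrt (2 * π) := by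
  unfold gmraw
  have h := integral_gaussian ((2 : ℝ)⁻¹)
  have heq : (fun x : ℝ => rexp (-(2 : ℝ)⁻¹ * x ^ 2)) = fun x : ℝ => x ^ 0 * rexp (-x ^ 2 / 2) := by
    funext x; ring_nf
  rw [heq] at h
  have : π / (2 : ℝ)⁻¹ = 2 * π := by ring
  rw [h, this]

lemma gmraw_one : gmraw 1 = 0 := by
  unfold gmraw
  have key := integral_of_hasDerivAt_of_tendsto (f := fun x : ℝ => -rexp (-x ^ 2 / 2))
    (f' := fun x : ℝ => x * rexp (-x ^ 2 / 2))
    (fun x => hasDerivAt_gexp x)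
    (by
      apply (integrable_gmraw 1).congr
      filter_upwards with x
      simp)
    (by simpa using tendsto_gexp_atBot.neg)
    (by simpa using tendsto_gexp_atTop.neg)
  simpa [pow_one] using key



lemma gpdf_eq (x : ℝ) : gaussianPDFReal 0 1 x = (Real.sqrt (2 * π))⁻¹ * rexp (-x ^ 2 / 2) := by
  simp [gaussianPDFReal]

lemma gaussianReal_std : gaussianReal 0 1
    = (volume : Measure ℝ).withDensity fun x => ((gaussianPDFReal 0 1 x).toNNReal : ENNReal) := by
  rw [gaussianReal_of_var_ne_zero 0 one_ne_zero]
  rfl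

lemma meas_toNN : Measurable fun x : ℝ => (gaussianPDFReal 0 1 x).toNNReal :=
  (measurable_gaussianPDFReal 0 1).real_toNNReal

lemma integral_pow_gaussian (k : ℕ) :
    ∫ x, x ^ k ∂(gaussianReal 0 1) = (Real.sqrt (2 * π))⁻¹ * gmraw k := by
  rw [gaussianReal_std, integral_withDensity_eq_integral_smul meas_toNN]
  rw [show (fun x : ℝ => (gaussianPDFReal 0 1 x).toNNReal • x ^ k)
      = fun x : ℝ => (Real.sqrt (2 * π))⁻¹ * (x ^ k * rexp (-x ^ 2 / 2)) from ?_]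
  · rw [integral_const_mul]; rfl
  · funext x
    rw [NNReal.smul_def, Real.coe_toNNReal _ (gaussianPDFReal_nonneg 0 1 x), gpdf_eq]
    simp [smul_eq_mul]; ring

lemma integrable_pow_gaussian (k : ℕ) :
    Integrable (fun x : ℝ => x ^ k) (gaussianReal 0 1) := by
  rw [gaussianReal_std, integrable_withDensity_iff_integrable_smul meas_toNN]
  have : (fun x : ℝ => (gaussianPDFReal 0 1 x).toNNReal • x ^ k)
      = fun x : ℝ => (Real.sqrt (2 * π))⁻¹ * (x ^ k * rexp (-x ^ 2 / 2)) := by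
    funext x
    rw [NNReal.smul_def, Real.coe_toNNReal _ (gaussianPDFReal_nonneg 0 1 x), gpdf_eq]
    simp [smul_eq_mul]; ring
  rw [this]
  exact (integrable_gmraw k).const_mul _

lemma ig0' : ∫ x, x ^ 0 ∂(gaussianReal 0 1) = 1 := by simp
lemma ig1 : ∫ x, x ^ 1 ∂(gaussianReal 0 1) = 0 := by
  rw [integral_pow_gaussian, gmraw_one, mul_zero]
lemma ig1' : ∫ x : ℝ, x ∂(gaussianReal 0 1) = 0 := by simpa using ig1
lemma ig2 : ∫ x, x ^ 2 ∂(gaussianReal 0 1) = 1 := by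
  have h := integral_pow_gaussian 2
  rw [show (2 : ℕ) = 0 + 2 from rfl, gmraw_rec, gmraw_zero] at h
  rw [h]
  have h2 : Real.sqrt (2 * π) ≠ 0 := by positivity
  field_simp
  simp
lemma ig3 : ∫ x, x ^ 3 ∂(gaussianReal 0 1) = 0 := by
  have h := integral_pow_gaussian 3
  rw [show (3 : ℕ) = 1 + 2 from rfl, gmraw_rec, gmraw_one] at h
  rw [h]; ring
lemma ig4 : ∫ x, x ^ 4 ∂(gaussianReal 0 1) = 3 := by
  have h := integral_pow_gaussian 4
  rw [show (4 : ℕ) = 2 + 2 from rfl, gmraw_rec,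
    show (2 : ℕ) = 0 + 2 from rfl, gmraw_rec, gmraw_zero] at h
  rw [h]
  have h2 : Real.sqrt (2 * π) ≠ 0 := by positivity
  field_simp
  ring


lemma gaussianReal_sigma_map (σ : NNReal) :
    (gaussianReal 0 1).map (· * (σ : ℝ)) = gaussianReal 0 (σ ^ 2) := by
  rw [gaussianReal_map_mul_const (σ : ℝ)]
  congr 1
  · ring
  · ext
    simp [NNReal.coe_pow]

lemma integral_pow_gaussian_sigma (σ : NNReal) (k : ℕ) :
    ∫ x, x ^ k ∂(gaussianReal 0 (σ ^ 2))
      = (σ : ℝ) ^ k * ∫ x, x ^ k ∂(gaussianReal 0 1) := by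
  rw [← gaussianReal_sigma_map σ,
    integral_map (by fun_prop) (by fun_prop : AEStronglyMeasurable (fun x : ℝ => x ^ k) _)]
  simp_rw [mul_pow]
  rw [integral_mul_const, mul_comm]

lemma integrable_pow_gaussian_sigma (σ : NNReal) (k : ℕ)
    (h1 : Integrable (fun x : ℝ => x ^ k) (gaussianReal 0 1)) :
    Integrable (fun x : ℝ => x ^ k) (gaussianReal 0 (σ ^ 2)) := by
  rw [← gaussianReal_sigma_map σ,
    integrable_map_measure (by fun_prop) (by fun_prop)]
  have := (h1.mul_const ((σ : ℝ) ^ k))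
  apply this.congr
  filter_upwards with x
  simp [Function.comp, mul_pow]

lemma integral_pi_prod {n : ℕ} (μ : Measure ℝ) [IsProbabilityMeasure μ] (f : Fin n → ℝ → ℝ) :
    ∫ x : Fin n → ℝ, ∏ i, f i (x i) ∂(Measure.pi fun _ => μ) = ∏ i, ∫ t, f i t ∂μ := by
  induction n with
  | zero => simp
  | succ n ih =>
    calc ∫ x : Fin (n+1) → ℝ, ∏ i, f i (x i) ∂(Measure.pi fun _ => μ)
        = ∫ p : ℝ × (Fin n → ℝ), f 0 p.1 * ∏ i : Fin n, f i.succ (p.2 i)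
            ∂(μ.prod (Measure.pi fun _ => μ)) := by
          rw [← ((MeasureTheory.measurePreserving_piFinSuccAbove
            (fun _ : Fin (n+1) => μ) 0).symm).integral_comp']
          simp only [MeasurableEquiv.piFinSuccAbove_symm_apply, Fin.insertNthEquiv,
            Fin.prod_univ_succ, Fin.insertNth_zero, Equiv.coe_fn_mk, Fin.cons_succ,
            Fin.zero_succAbove, Fin.cons_zero, cast_eq]
      _ = (∫ t, f 0 t ∂μ) * ∏ i : Fin n, ∫ t, f i.succ t ∂μ := by
          rw [integral_prod_mul (f := f 0) (g := fun x : Fin n → ℝ => ∏ i, f i.succ (x i)),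
            ih (fun i => f i.succ)]
      _ = ∏ i, ∫ t, f i t ∂μ := by rw [Fin.prod_univ_succ]

lemma integrable_pi_prod {n : ℕ} (μ : Measure ℝ) [IsProbabilityMeasure μ] (f : Fin n → ℝ → ℝ)
    (hf : ∀ i, Integrable (f i) μ) :
    Integrable (fun x : Fin n → ℝ => ∏ i, f i (x i)) (Measure.pi fun _ => μ) := by
  induction n with
  | zero => simp [integrable_const_iff]
  | succ n ih =>
    have hmp := (MeasureTheory.measurePreserving_piFinSuccAbove (fun _ : Fin (n+1) => μ) 0).symm
    rw [← hmp.integrable_comp_emb (MeasurableEquiv.measurableEmbedding _)]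
    simp_rw [MeasurableEquiv.piFinSuccAbove_symm_apply, Fin.insertNthEquiv,
      Fin.prod_univ_succ, Fin.insertNth_zero, cast_eq]
    simp only [Fin.zero_succAbove, Function.comp_def, Equiv.coe_fn_mk, Fin.cons_zero,
      Fin.cons_succ]
    exact Integrable.mul_prod (hf 0) (ih (fun i => f i.succ) (fun i => hf _))


section Pi

variable {n : ℕ} (i : Fin n)

local notation "Π" => (Measure.pi fun _ : Fin n => gaussianReal 0 1)

lemma val_pow_pi (e : Fin n → ℕ) :
    ∫ x : Fin n → ℝ, ∏ m, (x m) ^ (e m) ∂Π = ∏ m, ∫ t : ℝ, t ^ (e m) ∂(gaussianReal 0 1) :=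
  integral_pi_prod _ _

lemma int_pow_pi (e : Fin n → ℕ) :
    Integrable (fun x : Fin n → ℝ => ∏ m, (x m) ^ (e m)) Π :=
  integrable_pi_prod _ _ fun m => integrable_pow_gaussian (e m)

lemma mono2 : (fun x : Fin n → ℝ => (x i) ^ 2)
    = fun x => ∏ m, (x m) ^ (if m = i then 2 else 0) := by
  funext x
  simp [pow_ite, Finset.prod_ite_eq']

lemma mono3 (k : Fin n) : (fun x : Fin n → ℝ => x k * (x i) ^ 2)
    = fun x => ∏ m, (x m) ^ ((if m = k then 1 else 0) + (if m = i then 2 else 0)) := by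
  funext x
  simp only [pow_add, Finset.prod_mul_distrib]
  simp [pow_ite, Finset.prod_ite_eq']

lemma mono4 (k l : Fin n) : (fun x : Fin n → ℝ => x k * x l * (x i) ^ 2)
    = fun x => ∏ m, (x m) ^
        ((if m = k then 1 else 0) + (if m = l then 1 else 0) + (if m = i then 2 else 0)) := by
  funext x
  simp only [pow_add, Finset.prod_mul_distrib]
  simp [pow_ite, Finset.prod_ite_eq']

lemma int_mono2 : Integrable (fun x : Fin n → ℝ => (x i) ^ 2) Π := by
  rw [mono2]; exact int_pow_pi _

lemma int_mono3 (k : Fin n) : Integrable (fun x : Fin n → ℝ => x k * (x i) ^ 2) Π := by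
  rw [mono3]; exact int_pow_pi _

lemma int_mono4 (k l : Fin n) : Integrable (fun x : Fin n → ℝ => x k * x l * (x i) ^ 2) Π := by
  rw [mono4]; exact int_pow_pi _

lemma val_mono2 : ∫ x : Fin n → ℝ, (x i) ^ 2 ∂Π = 1 := by
  rw [mono2, val_pow_pi]
  apply Finset.prod_eq_one
  intro m _
  by_cases h : m = i <;> simp [h, ig2, ig0']

lemma val_mono4 (k l : Fin n) : ∫ x : Fin n → ℝ, x k * x l * (x i) ^ 2 ∂Π
    = if k = l then (if k = i then (3 : ℝ) else 1) else 0 := by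
  rw [mono4, val_pow_pi]
  by_cases hkl : k = l
  · subst hkl
    by_cases hki : k = i
    · subst hki
      simp only [if_pos rfl]
      have he : ∀ m : Fin n, (∫ t : ℝ, t ^
          ((if m = k then 1 else 0) + (if m = k then 1 else 0) + (if m = k then 2 else 0))
          ∂(gaussianReal 0 1)) = if m = k then (3 : ℝ) else 1 := by
        intro m
        by_cases h : m = k <;> simp [h, ig4, ig0']
      rw [Finset.prod_congr rfl fun m _ => he m, Finset.prod_ite_eq' Finset.univ k fun _ => (3:ℝ)]
      simp
    · simp only [if_pos rfl, if_neg hki]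
      apply Finset.prod_eq_one
      intro m _
      have h3 : ¬ i = k := fun h => hki h.symm
      by_cases h1 : m = k
      · have h2 : ¬ m = i := by rw [h1]; exact hki
        simp [h1, h2, if_neg hki, ig2]
      · by_cases h2 : m = i <;> simp [h1, h2, h3, ig2, ig0']
  · rw [if_neg hkl]
    by_cases hki : k = i
    · -- then l ≠ i, l ≠ k; the factor at l is ∫ t^1 = 0
      have hli : ¬ l = i := fun h => hkl (h ▸ hki)
      have hlk : ¬ l = k := fun h => hkl (h.symm)
      apply Finset.prod_eq_zero (Finset.mem_univ l)
      simp [hlk, hli, ig1']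
    · -- factor at k is ∫ t^1 = 0
      have hklc : ¬ k = l := hkl
      apply Finset.prod_eq_zero (Finset.mem_univ k)
      simp [hklc, hki, ig1']

end Pi

section Sigma

variable (σ : NNReal)

lemma iν1 : ∫ t : ℝ, t ∂(gaussianReal 0 (σ ^ 2)) = 0 := by
  have := integral_pow_gaussian_sigma σ 1
  rw [ig1, mul_zero] at this
  simpa using this

lemma iν2 : ∫ t : ℝ, t ^ 2 ∂(gaussianReal 0 (σ ^ 2)) = (σ : ℝ) ^ 2 := by
  rw [integral_pow_gaussian_sigma σ 2, ig2, mul_one]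

lemma intν (k : ℕ) : Integrable (fun t : ℝ => t ^ k) (gaussianReal 0 (σ ^ 2)) :=
  integrable_pow_gaussian_sigma σ k (integrable_pow_gaussian k)

end Sigma

section PerJ

variable {n : ℕ} (i : Fin n) (w : Fin n → ℝ) (σ : NNReal)

local notation "Π" => (Measure.pi fun _ : Fin n => gaussianReal 0 1)
local notation "ν" => (gaussianReal 0 (σ ^ 2))

lemma hA_eq : (fun x : Fin n → ℝ => (∑ k, w k * x k) ^ 2 * (x i) ^ 2)
    = fun x => ∑ k, ∑ l, (w k * w l) * (x k * x l * (x i) ^ 2) := by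
  funext x
  rw [sq, Finset.sum_mul_sum, Finset.sum_mul]
  refine Finset.sum_congr rfl fun k _ => ?_
  rw [Finset.sum_mul]
  exact Finset.sum_congr rfl fun l _ => by ring

lemma hB_eq : (fun x : Fin n → ℝ => (∑ k, w k * x k) * (x i) ^ 2)
    = fun x => ∑ k, (w k) * (x k * (x i) ^ 2) := by
  funext x
  rw [Finset.sum_mul]
  exact Finset.sum_congr rfl fun l _ => by ring

lemma int_A : Integrable (fun x : Fin n → ℝ => (∑ k, w k * x k) ^ 2 * (x i) ^ 2) Π := by
  rw [hA_eq]
  apply integrable_finset_sum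
  intro k _
  apply integrable_finset_sum
  intro l _
  exact (int_mono4 i k l).const_mul _

lemma int_B : Integrable (fun x : Fin n → ℝ => (∑ k, w k * x k) * (x i) ^ 2) Π := by
  rw [hB_eq]
  apply integrable_finset_sum
  intro k _
  exact (int_mono3 i k).const_mul _

lemma val_A : ∫ x : Fin n → ℝ, (∑ k, w k * x k) ^ 2 * (x i) ^ 2 ∂Π
    = (∑ k, (w k) ^ 2) + 2 * (w i) ^ 2 := by
  rw [hA_eq]
  rw [integral_finset_sum _ fun k _ => integrable_finset_sum _
    fun l _ => (int_mono4 i k l).const_mul _]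
  have step : ∀ k : Fin n, (∫ x : Fin n → ℝ, ∑ l, (w k * w l) * (x k * x l * (x i) ^ 2) ∂Π)
      = (w k) ^ 2 * (if k = i then (3:ℝ) else 1) := by
    intro k
    rw [integral_finset_sum _ fun l _ => (int_mono4 i k l).const_mul _]
    have : ∀ l : Fin n, (∫ x : Fin n → ℝ, (w k * w l) * (x k * x l * (x i) ^ 2) ∂Π)
        = (w k * w l) * (if k = l then (if k = i then (3:ℝ) else 1) else 0) := by
      intro l
      rw [integral_const_mul, val_mono4]
    rw [Finset.sum_congr rfl fun l _ => this l]
    have h2 : ∀ l : Fin n, w k * w l * (if k = l then (if k = i then (3:ℝ) else 1) else 0)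
        = if k = l then w k * w l * (if k = i then (3:ℝ) else 1) else 0 := by
      intro l
      by_cases h : k = l <;> simp [h]
    rw [Finset.sum_congr rfl fun l _ => h2 l, Finset.sum_ite_eq]
    simp only [Finset.mem_univ, if_true]
    ring
  rw [Finset.sum_congr rfl fun k _ => step k]
  have : ∀ k : Fin n, (w k) ^ 2 * (if k = i then (3:ℝ) else 1)
      = (w k) ^ 2 + (if k = i then 2 * (w k) ^ 2 else 0) := by
    intro k
    by_cases h : k = i <;> simp [h] <;> ring
  rw [Finset.sum_congr rfl fun k _ => this k, Finset.sum_add_distrib,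
    Finset.sum_ite_eq' Finset.univ i fun k => 2 * (w k) ^ 2]
  simp

lemma hre_eq : (fun p : (Fin n → ℝ) × ℝ => ((∑ k, w k * p.1 k) + p.2) ^ 2 * (p.1 i) ^ 2)
    = fun p : (Fin n → ℝ) × ℝ =>
        ((fun x : Fin n → ℝ => (∑ k, w k * x k) ^ 2 * (x i) ^ 2) p.1 * (fun _ : ℝ => (1:ℝ)) p.2
        + (fun x : Fin n → ℝ => 2 * ((∑ k, w k * x k) * (x i) ^ 2)) p.1 * (fun t : ℝ => t) p.2)
        + (fun x : Fin n → ℝ => (x i) ^ 2) p.1 * (fun t : ℝ => t ^ 2) p.2 := by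
  funext p
  simp only []
  ring

lemma int_perj : Integrable
    (fun p : (Fin n → ℝ) × ℝ => ((∑ k, w k * p.1 k) + p.2) ^ 2 * (p.1 i) ^ 2) ((Π).prod ν) := by
  rw [hre_eq]
  refine Integrable.add (Integrable.add ?_ ?_) ?_
  · exact (int_A i w).mul_prod (integrable_const 1)
  · exact ((int_B i w).const_mul 2).mul_prod (by simpa using intν σ 1)
  · exact (int_mono2 i).mul_prod (intν σ 2)

lemma val_perj :
    ∫ p : (Fin n → ℝ) × ℝ, ((∑ k, w k * p.1 k) + p.2) ^ 2 * (p.1 i) ^ 2 ∂((Π).prod ν)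
      = ((∑ k, (w k) ^ 2) + 2 * (w i) ^ 2) + (σ : ℝ) ^ 2 := by
  have hI1 : Integrable (fun p : (Fin n → ℝ) × ℝ =>
      (fun x : Fin n → ℝ => (∑ k, w k * x k) ^ 2 * (x i) ^ 2) p.1 * (fun _ : ℝ => (1:ℝ)) p.2)
      ((Π).prod ν) := (int_A i w).mul_prod (integrable_const 1)
  have hI2 : Integrable (fun p : (Fin n → ℝ) × ℝ =>
      (fun x : Fin n → ℝ => 2 * ((∑ k, w k * x k) * (x i) ^ 2)) p.1 * (fun t : ℝ => t) p.2)
      ((Π).prod ν) := ((int_B i w).const_mul 2).mul_prod (by simpa using intν σ 1)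
  have hI3 : Integrable (fun p : (Fin n → ℝ) × ℝ =>
      (fun x : Fin n → ℝ => (x i) ^ 2) p.1 * (fun t : ℝ => t ^ 2) p.2)
      ((Π).prod ν) := (int_mono2 i).mul_prod (intν σ 2)
  have hI12 : Integrable (fun p : (Fin n → ℝ) × ℝ =>
      (fun x : Fin n → ℝ => (∑ k, w k * x k) ^ 2 * (x i) ^ 2) p.1 * (fun _ : ℝ => (1:ℝ)) p.2
      + (fun x : Fin n → ℝ => 2 * ((∑ k, w k * x k) * (x i) ^ 2)) p.1 * (fun t : ℝ => t) p.2)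
      ((Π).prod ν) := hI1.add hI2
  rw [hre_eq, integral_add hI12 hI3, integral_add hI1 hI2,
    integral_prod_mul (f := fun x : Fin n → ℝ => (∑ k, w k * x k) ^ 2 * (x i) ^ 2)
      (g := fun _ : ℝ => (1:ℝ)),
    integral_prod_mul (f := fun x : Fin n → ℝ => 2 * ((∑ k, w k * x k) * (x i) ^ 2))
      (g := fun t : ℝ => t),
    integral_prod_mul (f := fun x : Fin n → ℝ => (x i) ^ 2) (g := fun t : ℝ => t ^ 2),
    val_A, iν1, iν2, val_mono2]
  simp

end PerJ

lemma aux_main (n ℓ : ℕ) (hℓ : 0 < ℓ)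
    (v : Fin ℓ → Fin n → ℝ) (σ : NNReal) (i : Fin n) :
    (∫ p : (Fin n → ℝ) × ℝ, p.2 ^ 2 * (p.1 i) ^ 2
        ∂((ℓ : ENNReal)⁻¹ • ∑ j : Fin ℓ,
          Measure.map (fun p : (Fin n → ℝ) × ℝ => (p.1, (∑ i, v j i * p.1 i) + p.2))
            ((Measure.pi fun _ : Fin n => gaussianReal 0 1).prod (gaussianReal 0 (σ ^ 2)))))
        = (1 / ℓ : ℝ) * (∑ j : Fin ℓ, ((∑ k, (v j k) ^ 2) + 2 * (v j i) ^ 2))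
          + (σ : ℝ) ^ 2 := by
  set μprod := (Measure.pi fun _ : Fin n => gaussianReal 0 1).prod (gaussianReal 0 (σ ^ 2))
    with hμprod
  set f : (Fin n → ℝ) × ℝ → ℝ := fun p => p.2 ^ 2 * (p.1 i) ^ 2 with hf
  have hfm : Measurable f := by fun_prop
  have hT : ∀ j : Fin ℓ, Measurable
      (fun p : (Fin n → ℝ) × ℝ => (p.1, (∑ k, v j k * p.1 k) + p.2)) := by
    intro j
    apply measurable_fst.prodMk
    exact (Finset.measurable_sum Finset.univ fun k _ =>
      ((measurable_pi_apply k).comp measurable_fst).const_mul _).add measurable_snd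
  have hcomp : ∀ j : Fin ℓ, (f ∘ fun p : (Fin n → ℝ) × ℝ => (p.1, (∑ k, v j k * p.1 k) + p.2))
      = fun p : (Fin n → ℝ) × ℝ => ((∑ k, v j k * p.1 k) + p.2) ^ 2 * (p.1 i) ^ 2 := by
    intro j; rfl
  have hint : ∀ j : Fin ℓ, Integrable f
      (Measure.map (fun p : (Fin n → ℝ) × ℝ => (p.1, (∑ k, v j k * p.1 k) + p.2)) μprod) := by
    intro j
    rw [integrable_map_measure hfm.aestronglyMeasurable (hT j).aemeasurable, hcomp j]
    exact int_perj i (v j) σ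
  rw [integral_smul_measure, MeasureTheory.integral_finset_sum_measure fun j _ => hint j]
  have hval : ∀ j : Fin ℓ, (∫ p, f p
      ∂(Measure.map (fun p : (Fin n → ℝ) × ℝ => (p.1, (∑ k, v j k * p.1 k) + p.2)) μprod))
      = ((∑ k, (v j k) ^ 2) + 2 * (v j i) ^ 2) + (σ : ℝ) ^ 2 := by
    intro j
    rw [integral_map (hT j).aemeasurable hfm.aestronglyMeasurable]
    exact val_perj i (v j) σ
  rw [Finset.sum_congr rfl fun j _ => hval j, Finset.sum_add_distrib, Finset.sum_const]
  have hℓ' : (ℓ : ℝ) ≠ 0 := Nat.cast_ne_zero.mpr hℓ.ne'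
  rw [smul_eq_mul, ENNReal.toReal_inv, ENNReal.toReal_natCast]
  simp only [Finset.card_univ, Fintype.card_fin, nsmul_eq_mul]
  field_simp


/-- The MLR sample distribution `P_r` on pairs `(x, y)`: the coordinates of `x`
are i.i.d. standard Gaussian, `v` is drawn uniformly from the multiset
`V = {v⁽¹⁾, …, v⁽ℓ⁾}`, `ζ ∼ N(0, σ²)` independently, and `y = ⟨v, x⟩ + ζ`. -/
noncomputable def mlrMeasure (n ℓ : ℕ) (v : Fin ℓ → Fin n → ℝ) (σ : NNReal) :
    Measure ((Fin n → ℝ) × ℝ) :=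
  (ℓ : ENNReal)⁻¹ • ∑ j : Fin ℓ,
    Measure.map (fun p : (Fin n → ℝ) × ℝ => (p.1, (∑ i, v j i * p.1 i) + p.2))
      ((Measure.pi fun _ : Fin n => gaussianReal 0 1).prod (gaussianReal 0 (σ ^ 2)))

/-- For `(x, y) ∼ P_r` and every coordinate `i`,
`E[y² x_i²] = (1/ℓ) Σ_{v∈V} (‖v‖₂² + 2 v_i²) + σ²`.  In particular, if no
vector of `V` has a non-zero `i`-th entry then `E[y² x_i²] = (1/ℓ) Σ_v ‖v‖₂² + σ²`,
while if every non-zero entry of every vector is at least `δ > 0` in magnitude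
and some vector has a non-zero `i`-th entry, then
`E[y² x_i²] ≥ (1/ℓ) Σ_v ‖v‖₂² + σ² + 2δ²/ℓ`. -/
theorem mlr_second_moment_coordinate (n ℓ : ℕ) (hℓ : 0 < ℓ)
    (v : Fin ℓ → Fin n → ℝ) (σ : NNReal) (i : Fin n) :
    (∫ p : (Fin n → ℝ) × ℝ, p.2 ^ 2 * (p.1 i) ^ 2 ∂(mlrMeasure n ℓ v σ))
        = (1 / ℓ : ℝ) * (∑ j : Fin ℓ, ((∑ k, (v j k) ^ 2) + 2 * (v j i) ^ 2))
          + (σ : ℝ) ^ 2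
    ∧ ((∀ j, v j i = 0) →
        (∫ p : (Fin n → ℝ) × ℝ, p.2 ^ 2 * (p.1 i) ^ 2 ∂(mlrMeasure n ℓ v σ))
          = (1 / ℓ : ℝ) * (∑ j : Fin ℓ, ∑ k, (v j k) ^ 2) + (σ : ℝ) ^ 2)
    ∧ (∀ δ : ℝ, 0 < δ → (∀ j k, v j k ≠ 0 → δ ≤ |v j k|) → (∃ j, v j i ≠ 0) →
        (1 / ℓ : ℝ) * (∑ j : Fin ℓ, ∑ k, (v j k) ^ 2) + (σ : ℝ) ^ 2
            + 2 * δ ^ 2 / ℓ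
          ≤ ∫ p : (Fin n → ℝ) × ℝ, p.2 ^ 2 * (p.1 i) ^ 2 ∂(mlrMeasure n ℓ v σ)) := by
  have hmain : (∫ p : (Fin n → ℝ) × ℝ, p.2 ^ 2 * (p.1 i) ^ 2 ∂(mlrMeasure n ℓ v σ))
      = (1 / ℓ : ℝ) * (∑ j : Fin ℓ, ((∑ k, (v j k) ^ 2) + 2 * (v j i) ^ 2)) + (σ : ℝ) ^ 2 :=
    aux_main n ℓ hℓ v σ i
  refine ⟨hmain, ?_, ?_⟩
  · intro hz
    rw [hmain]
    congr 2
    refine Finset.sum_congr rfl fun j _ => ?_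
    rw [hz j]
    ring
  · intro δ hδ hbound ⟨j₀, hj₀⟩
    rw [hmain]
    have hδ2 : δ ^ 2 ≤ (v j₀ i) ^ 2 := by
      have h1 := hbound j₀ i hj₀
      calc δ ^ 2 ≤ |v j₀ i| ^ 2 := pow_le_pow_left₀ hδ.le h1 2
        _ = (v j₀ i) ^ 2 := sq_abs _
    have key : (∑ j : Fin ℓ, ∑ k, (v j k) ^ 2) + 2 * δ ^ 2
        ≤ ∑ j : Fin ℓ, ((∑ k, (v j k) ^ 2) + 2 * (v j i) ^ 2) := by
      rw [Finset.sum_add_distrib]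
      have h2 : 2 * δ ^ 2 ≤ ∑ j : Fin ℓ, 2 * (v j i) ^ 2 := by
        have hs := Finset.single_le_sum (f := fun j : Fin ℓ => 2 * (v j i) ^ 2)
          (fun j _ => by positivity) (Finset.mem_univ j₀)
        nlinarith
      linarith
    have hpos : (0 : ℝ) ≤ 1 / ℓ := by positivity
    have h3 := mul_le_mul_of_nonneg_left key hpos
    have h4 : (1 / ℓ : ℝ) * ((∑ j : Fin ℓ, ∑ k, (v j k) ^ 2) + 2 * δ ^ 2)
        = (1 / ℓ : ℝ) * (∑ j : Fin ℓ, ∑ k, (v j k) ^ 2) + 2 * δ ^ 2 / ℓ := by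
      ring
    linarith
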